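/- Let f_1,…,f_n : ℝ^d → ℝ be differentiable with L-Lipschitz gradients and f = (1/n)∑_{i=1}^n f_i. Fix points x^{(1)},…,x^{(n)} ∈ ℝ^d with mean x̄ = (1/n)∑_i x^{(i)}, and assume (1/n)∑_{i=1}^n ‖∇f_i(x̄) − ∇f(x̄)‖² ≤ ζ². Let g^{(1)},…,g^{(n)} be independent random vectors in ℝ^d with E[g^{(i)}] = ∇f_i(x^{(i)}) and E‖g^{(i)} − ∇f_i(x^{(i)})‖² ≤ σ². Set v^{(i)} = x^{(i)} − γ·g^{(i)} and v̄ = (1/n)∑_i v^{(i)}. Then E[ ∑_{i=1}^n ‖v^{(i)} − v̄‖² ] ≤ (2 + 12L²γ²)·∑_{i=1}^n ‖x^{(i)} − x̄‖² + 6nγ²ζ² + 2nγ²σ². -/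

import Mathlib

open MeasureTheory ProbabilityTheory Real
open scoped RealInnerProductSpace ENNReal

lemma sum_sq_mean_le {E : Type*} [NormedAddCommGroup E] [InnerProductSpace ℝ E]
    {n : ℕ} (hn : 1 ≤ n) (u : Fin n → E) (c : E) :
    ∑ i, ‖u i - (1 / (n : ℝ)) • ∑ k, u k‖ ^ 2 ≤ ∑ i, ‖u i - c‖ ^ 2 := by
  have hn' : (n : ℝ) ≠ 0 := by positivity
  set m := (1 / (n : ℝ)) • ∑ k, u k with hm
  have hsum : ∑ i : Fin n, (u i - m) = 0 := by
    rw [Finset.sum_sub_distrib, Finset.sum_const, Finset.card_univ, Fintype.card_fin,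
      hm, ← Nat.cast_smul_eq_nsmul ℝ, smul_smul, mul_one_div, div_self hn', one_smul, sub_self]
  have key : ∀ i : Fin n, ‖u i - c‖ ^ 2 = ‖u i - m‖ ^ 2 + 2 * ⟪u i - m, m - c⟫ + ‖m - c‖ ^ 2 := by
    intro i
    have h : u i - c = (u i - m) + (m - c) := by abel
    rw [h, norm_add_sq_real]
  have hid : ∑ i, ‖u i - c‖ ^ 2
      = (∑ i, ‖u i - m‖ ^ 2) + 2 * ⟪∑ i : Fin n, (u i - m), m - c⟫ + (n : ℝ) * ‖m - c‖ ^ 2 := by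
    simp_rw [key]
    rw [Finset.sum_add_distrib, Finset.sum_add_distrib, ← Finset.mul_sum, ← sum_inner,
      Finset.sum_const, Finset.card_univ, Fintype.card_fin, nsmul_eq_mul]
  rw [hid, hsum, inner_zero_left]
  have : 0 ≤ (n : ℝ) * ‖m - c‖ ^ 2 := by positivity
  linarith

set_option maxHeartbeats 1000000 in
theorem statement4 {Ω : Type*} [MeasurableSpace Ω] {μ : Measure Ω} [IsProbabilityMeasure μ]
    {n d : ℕ} (hn : 1 ≤ n) (L σ ζ γ : ℝ)
    (hL : 0 ≤ L) (hσ : 0 ≤ σ) (hζ : 0 ≤ ζ) (hγ : 0 ≤ γ)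
    (f : Fin n → EuclideanSpace ℝ (Fin d) → ℝ)
    (hdiff : ∀ i, Differentiable ℝ (f i))
    (hlip : ∀ i x y, ‖gradient (f i) x - gradient (f i) y‖ ≤ L * ‖x - y‖)
    (F : EuclideanSpace ℝ (Fin d) → ℝ)
    (hF : F = fun x => (1 / (n : ℝ)) * ∑ i, f i x)
    (x : Fin n → EuclideanSpace ℝ (Fin d))
    (xbar : EuclideanSpace ℝ (Fin d))
    (hxbar : xbar = (1 / (n : ℝ)) • ∑ i, x i)
    (hζbound : (1 / (n : ℝ)) * ∑ i, ‖gradient (f i) xbar - gradient F xbar‖ ^ 2 ≤ ζ ^ 2)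
    (g : Fin n → Ω → EuclideanSpace ℝ (Fin d))
    (hmeas : ∀ i, Measurable (g i))
    (hL2 : ∀ i, MemLp (g i) 2 μ)
    (hindep : iIndepFun g μ)
    (hmean : ∀ i, (∫ ω, g i ω ∂μ) = gradient (f i) (x i))
    (hvar : ∀ i, (∫ ω, ‖g i ω - gradient (f i) (x i)‖ ^ 2 ∂μ) ≤ σ ^ 2)
    (v : Fin n → Ω → EuclideanSpace ℝ (Fin d))
    (hv : ∀ i ω, v i ω = x i - γ • g i ω) :
    (∫ ω, ∑ i, ‖v i ω - (1 / (n : ℝ)) • ∑ k, v k ω‖ ^ 2 ∂μ) ≤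
      (2 + 12 * L ^ 2 * γ ^ 2) * ∑ i, ‖x i - xbar‖ ^ 2 +
        6 * n * γ ^ 2 * ζ ^ 2 + 2 * n * γ ^ 2 * σ ^ 2 := by
  have hn' : (n : ℝ) ≠ 0 := by positivity
  set G : EuclideanSpace ℝ (Fin d) := gradient F xbar with hG
  set m : Fin n → EuclideanSpace ℝ (Fin d) := fun i => gradient (f i) (x i) with hm
  -- pointwise bound
  have hpt : ∀ ω, ∑ i, ‖v i ω - (1 / (n : ℝ)) • ∑ k, v k ω‖ ^ 2
      ≤ ∑ i, (2 * ‖x i - xbar‖ ^ 2 + 2 * γ ^ 2 * ‖g i ω - G‖ ^ 2) := by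
    intro ω
    refine (sum_sq_mean_le hn (fun i => v i ω) (xbar - γ • G)).trans ?_
    refine Finset.sum_le_sum fun i _ => ?_
    have hrw : v i ω - (xbar - γ • G) = (x i - xbar) - γ • (g i ω - G) := by
      rw [hv i ω, smul_sub]; abel
    rw [hrw]
    have h1 : ‖(x i - xbar) - γ • (g i ω - G)‖ ≤ ‖x i - xbar‖ + γ * ‖g i ω - G‖ := by
      refine (norm_sub_le _ _).trans ?_
      rw [norm_smul, Real.norm_eq_abs, abs_of_nonneg hγ]
    nlinarith [norm_nonneg ((x i - xbar) - γ • (g i ω - G)), norm_nonneg (x i - xbar),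
      norm_nonneg (g i ω - G), sq_nonneg (‖x i - xbar‖ - γ * ‖g i ω - G‖)]
  -- integrability of ‖g i - G‖^2 and ‖g i - m i‖^2
  have hintG : ∀ (c : EuclideanSpace ℝ (Fin d)) i,
      Integrable (fun ω => ‖g i ω - c‖ ^ 2) μ := by
    intro c i
    have h := ((hL2 i).sub (memLp_const c)).integrable_norm_rpow
      (by norm_num) (by norm_num)
    refine h.congr (Filter.Eventually.of_forall fun ω => ?_)
    simp only [Pi.sub_apply]
    rw [show ((2 : ℝ≥0∞)).toReal = ((2 : ℕ) : ℝ) by norm_num, Real.rpow_natCast]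
  -- second moment bound
  have hIbound : ∀ i, (∫ ω, ‖g i ω - G‖ ^ 2 ∂μ) ≤ σ ^ 2 + ‖m i - G‖ ^ 2 := by
    intro i
    have haInt : Integrable (fun ω => g i ω - m i) μ :=
      ((hL2 i).sub (memLp_const _)).integrable one_le_two
    have ha0 : (∫ ω, (g i ω - m i) ∂μ) = 0 := by
      rw [integral_sub ((hL2 i).integrable one_le_two) (integrable_const _),
        hmean i, integral_const]
      simp [hm]
    have hkey : (∫ ω, ‖g i ω - G‖ ^ 2 ∂μ)
        = (∫ ω, ‖g i ω - m i‖ ^ 2 ∂μ) + ‖m i - G‖ ^ 2 := by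
      have hptw : ∀ ω, ‖g i ω - G‖ ^ 2
          = ‖g i ω - m i‖ ^ 2 + 2 * ⟪g i ω - m i, m i - G⟫ + ‖m i - G‖ ^ 2 := by
        intro ω
        have h : g i ω - G = (g i ω - m i) + (m i - G) := by abel
        rw [h, norm_add_sq_real]
      have hi1 : Integrable (fun ω => ‖g i ω - m i‖ ^ 2) μ := hintG (m i) i
      have hi2 : Integrable (fun ω => 2 * ⟪g i ω - m i, m i - G⟫) μ :=
        (haInt.inner_const _).const_mul 2
      calc (∫ ω, ‖g i ω - G‖ ^ 2 ∂μ)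
          = ∫ ω, (‖g i ω - m i‖ ^ 2 + 2 * ⟪g i ω - m i, m i - G⟫ + ‖m i - G‖ ^ 2) ∂μ := by
            exact integral_congr_ae (Filter.Eventually.of_forall fun ω => hptw ω)
        _ = (∫ ω, ‖g i ω - m i‖ ^ 2 ∂μ) + (∫ ω, 2 * ⟪g i ω - m i, m i - G⟫ ∂μ)
            + ‖m i - G‖ ^ 2 := by
            have hi12 : Integrable
                (fun ω => ‖g i ω - m i‖ ^ 2 + 2 * ⟪g i ω - m i, m i - G⟫) μ := hi1.add hi2
            rw [integral_add hi12 (integrable_const _), integral_add hi1 hi2, integral_const]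
            simp
        _ = (∫ ω, ‖g i ω - m i‖ ^ 2 ∂μ) + ‖m i - G‖ ^ 2 := by
            have : (∫ ω, 2 * ⟪g i ω - m i, m i - G⟫ ∂μ) = 0 := by
              rw [integral_const_mul]
              have h2 : (∫ ω, ⟪g i ω - m i, m i - G⟫ ∂μ)
                  = ∫ ω, ⟪m i - G, g i ω - m i⟫ ∂μ := by
                congr 1; funext ω; exact real_inner_comm _ _
              rw [h2, integral_inner haInt, ha0, inner_zero_right, mul_zero]
            rw [this, add_zero]
    rw [hkey]
    have := hvar i
    linarith
  -- bound ‖m i - G‖^2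
  have hmG : ∀ i, ‖m i - G‖ ^ 2
      ≤ 2 * L ^ 2 * ‖x i - xbar‖ ^ 2 + 2 * ‖gradient (f i) xbar - G‖ ^ 2 := by
    intro i
    have h1 : ‖m i - G‖ ≤ ‖m i - gradient (f i) xbar‖ + ‖gradient (f i) xbar - G‖ := by
      have h : m i - G = (m i - gradient (f i) xbar) + (gradient (f i) xbar - G) := by abel
      rw [h]; exact norm_add_le _ _
    have h2 : ‖m i - gradient (f i) xbar‖ ≤ L * ‖x i - xbar‖ := hlip i (x i) xbar
    nlinarith [norm_nonneg (m i - G), norm_nonneg (m i - gradient (f i) xbar),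
      norm_nonneg (gradient (f i) xbar - G), norm_nonneg (x i - xbar),
      sq_nonneg (‖m i - gradient (f i) xbar‖ - ‖gradient (f i) xbar - G‖),
      mul_le_mul h2 h2 (norm_nonneg _) (by positivity : (0:ℝ) ≤ L * ‖x i - xbar‖)]
  -- integrate
  have hRHSint : Integrable
      (fun ω => ∑ i, (2 * ‖x i - xbar‖ ^ 2 + 2 * γ ^ 2 * ‖g i ω - G‖ ^ 2)) μ := by
    refine integrable_finset_sum _ fun i _ => ?_
    exact (integrable_const _).add ((hintG G i).const_mul _)
  have step1 : (∫ ω, ∑ i, ‖v i ω - (1 / (n : ℝ)) • ∑ k, v k ω‖ ^ 2 ∂μ)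
      ≤ ∫ ω, ∑ i, (2 * ‖x i - xbar‖ ^ 2 + 2 * γ ^ 2 * ‖g i ω - G‖ ^ 2) ∂μ := by
    refine integral_mono_of_nonneg ?_ hRHSint (Filter.Eventually.of_forall hpt)
    exact Filter.Eventually.of_forall fun ω => Finset.sum_nonneg fun i _ => by positivity
  have step2 : (∫ ω, ∑ i, (2 * ‖x i - xbar‖ ^ 2 + 2 * γ ^ 2 * ‖g i ω - G‖ ^ 2) ∂μ)
      = ∑ i, (2 * ‖x i - xbar‖ ^ 2 + 2 * γ ^ 2 * (∫ ω, ‖g i ω - G‖ ^ 2 ∂μ)) := by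
    have hterm : ∀ i : Fin n,
        Integrable (fun ω => 2 * ‖x i - xbar‖ ^ 2 + 2 * γ ^ 2 * ‖g i ω - G‖ ^ 2) μ :=
      fun i => (integrable_const _).add ((hintG G i).const_mul _)
    rw [integral_finset_sum _ fun i _ => hterm i]
    refine Finset.sum_congr rfl fun i _ => ?_
    have hc : Integrable (fun ω => 2 * γ ^ 2 * ‖g i ω - G‖ ^ 2) μ := (hintG G i).const_mul _
    rw [integral_add (integrable_const _) hc, integral_const, integral_const_mul]
    simp
  -- final algebra
  set S := ∑ i, ‖x i - xbar‖ ^ 2 with hS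
  set T := ∑ i, ‖gradient (f i) xbar - G‖ ^ 2 with hT
  have hS0 : 0 ≤ S := Finset.sum_nonneg fun i _ => by positivity
  have hT0 : 0 ≤ T := Finset.sum_nonneg fun i _ => by positivity
  have hTn : T ≤ (n : ℝ) * ζ ^ 2 := by
    have hn0 : (0:ℝ) < n := by positivity
    rw [div_mul_eq_mul_div, one_mul, div_le_iff₀ hn0] at hζbound
    linarith [hζbound]
  have step3 : ∑ i, (2 * ‖x i - xbar‖ ^ 2 + 2 * γ ^ 2 * (∫ ω, ‖g i ω - G‖ ^ 2 ∂μ))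
      ≤ 2 * S + 2 * γ ^ 2 * ((n : ℝ) * σ ^ 2 + 2 * L ^ 2 * S + 2 * T) := by
    have hb : ∀ i ∈ Finset.univ, 2 * ‖x i - xbar‖ ^ 2 + 2 * γ ^ 2 * (∫ ω, ‖g i ω - G‖ ^ 2 ∂μ)
        ≤ 2 * ‖x i - xbar‖ ^ 2 + 2 * γ ^ 2 *
          (σ ^ 2 + 2 * L ^ 2 * ‖x i - xbar‖ ^ 2 + 2 * ‖gradient (f i) xbar - G‖ ^ 2) := by
      intro i _
      have h1 := hIbound i
      have h2 := hmG i
      have h3 : (∫ ω, ‖g i ω - G‖ ^ 2 ∂μ)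
          ≤ σ ^ 2 + 2 * L ^ 2 * ‖x i - xbar‖ ^ 2 + 2 * ‖gradient (f i) xbar - G‖ ^ 2 := by
        linarith
      have h4 := mul_le_mul_of_nonneg_left h3 (by positivity : (0:ℝ) ≤ 2 * γ ^ 2)
      linarith
    refine (Finset.sum_le_sum hb).trans_eq ?_
    rw [hS, hT]
    simp only [Finset.mul_sum, Finset.sum_add_distrib, ← Finset.mul_sum, Finset.sum_const,
      Finset.card_univ, Fintype.card_fin, nsmul_eq_mul]
    try ring
  have hfin : 2 * S + 2 * γ ^ 2 * ((n : ℝ) * σ ^ 2 + 2 * L ^ 2 * S + 2 * T)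
      ≤ (2 + 12 * L ^ 2 * γ ^ 2) * S + 6 * n * γ ^ 2 * ζ ^ 2 + 2 * n * γ ^ 2 * σ ^ 2 := by
    have hγ2 : (0:ℝ) ≤ γ ^ 2 := sq_nonneg γ
    have hζ2 : (0:ℝ) ≤ ζ ^ 2 := sq_nonneg ζ
    have hn0 : (0:ℝ) ≤ n := Nat.cast_nonneg n
    have e1 : 4 * γ ^ 2 * T ≤ 4 * γ ^ 2 * ((n : ℝ) * ζ ^ 2) :=
      mul_le_mul_of_nonneg_left hTn (by positivity)
    have e2 : 0 ≤ (n : ℝ) * γ ^ 2 * ζ ^ 2 := by positivity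
    have e3 : 0 ≤ L ^ 2 * γ ^ 2 * S := mul_nonneg (by positivity) hS0
    nlinarith [e1, e2, e3]
  calc (∫ ω, ∑ i, ‖v i ω - (1 / (n : ℝ)) • ∑ k, v k ω‖ ^ 2 ∂μ)
      ≤ ∫ ω, ∑ i, (2 * ‖x i - xbar‖ ^ 2 + 2 * γ ^ 2 * ‖g i ω - G‖ ^ 2) ∂μ := step1
    _ = ∑ i, (2 * ‖x i - xbar‖ ^ 2 + 2 * γ ^ 2 * (∫ ω, ‖g i ω - G‖ ^ 2 ∂μ)) := step2
    _ ≤ 2 * S + 2 * γ ^ 2 * ((n : ℝ) * σ ^ 2 + 2 * L ^ 2 * S + 2 * T) := step3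
    _ ≤ _ := hfin
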